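/- Every edge of the polytope P_w^M := conv{w(B) : B a basis of M} is parallel to w(i) − w(j) for some pair i, j ∈ N. Precisely: if u, v are distinct vertices of P_w^M such that [u,v] is a face of P_w^M exposed by a linear functional, then u − v = t·(w(i) − w(j)) for some i, j ∈ N and some real t. -/

import Mathlib

open Matrix

noncomputable def wsum {α : Type*} {d : ℕ} (w : α → (Fin d → ℝ)) (J : Set α) : Fin d → ℝ :=
  ∑ᶠ j ∈ J, w j

lemma wsum_insert {α : Type*} {d : ℕ} (w : α → (Fin d → ℝ)) {A : Set α} {j : α}
    (hA : A.Finite) (hj : j ∉ A) : wsum w (insert j A) = w j + wsum w A :=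
  finsum_mem_insert w hj hA

lemma wsum_exchange {α : Type*} {d : ℕ} (w : α → (Fin d → ℝ)) {B : Set α} {i j : α}
    (hB : B.Finite) (hi : i ∈ B) (hj : j ∉ B) :
    wsum w (insert j (B \ {i})) = wsum w B + (w j - w i) := by
  have h1 : wsum w (insert j (B \ {i})) = w j + wsum w (B \ {i}) :=
    wsum_insert w hB.diff (fun h => hj h.1)
  have h2 : wsum w B = w i + wsum w (B \ {i}) := by
    have hIns : insert i (B \ {i}) = B := by
      rw [Set.insert_diff_singleton, Set.insert_eq_of_mem hi]
    conv_lhs => rw [← hIns]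
    exact wsum_insert w hB.diff (fun h => h.2 rfl)
  rw [h1, h2]; abel

/-- Symmetric basis exchange for matroids (with `B₂` finite). -/
lemma base_symm_exchange {α : Type*} {M : Matroid α} {B₁ B₂ : Set α}
    (h₂fin : B₂.Finite) (h₁ : M.IsBase B₁) (h₂ : M.IsBase B₂) {e : α} (he : e ∈ B₁ \ B₂) :
    ∃ f ∈ B₂ \ B₁, M.IsBase (insert f (B₁ \ {e})) ∧ M.IsBase (insert e (B₂ \ {f})) := by
  have heE : e ∈ M.E := h₁.subset_ground he.1
  have hecl : e ∈ M.closure B₂ := by rw [h₂.closure_eq]; exact heE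
  set 𝒞 : Set (Set α) := {C | C ⊆ B₂ ∧ e ∈ M.closure C} with h𝒞
  have h𝒞fin : 𝒞.Finite := h₂fin.finite_subsets.subset (fun C hC => hC.1)
  obtain ⟨C, hC, hCmin⟩ :=
    Set.Finite.exists_minimalFor Set.ncard 𝒞 h𝒞fin ⟨B₂, subset_rfl, hecl⟩
  have hmin : ∀ f ∈ C, e ∉ M.closure (C \ {f}) := by
    intro f hf hcon
    have hmem : C \ {f} ∈ 𝒞 := ⟨Set.diff_subset.trans hC.1, hcon⟩
    have hfinC : C.Finite := h₂fin.subset hC.1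
    have hlt : (C \ {f}).ncard < C.ncard := Set.ncard_diff_singleton_lt_of_mem hf hfinC
    have := hCmin hmem (le_of_lt hlt)
    omega
  have heK : e ∉ M.closure (B₁ \ {e}) := h₁.indep.notMem_closure_diff_of_mem he.1
  have hCK : ¬ C ⊆ M.closure (B₁ \ {e}) := by
    intro hsub
    exact heK (Matroid.closure_subset_closure_of_subset_closure hsub hC.2)
  obtain ⟨f, hfC, hfK⟩ := Set.not_subset.1 hCK
  have hfB₂ : f ∈ B₂ := hC.1 hfC
  have hfe : f ≠ e := by rintro rfl; exact he.2 hfB₂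
  have hfB₁ : f ∉ B₁ := by
    intro hfB₁
    exact hfK (M.mem_closure_of_mem ⟨hfB₁, hfe⟩ (Set.diff_subset.trans h₁.subset_ground))
  have hind1 : M.Indep (insert f (B₁ \ {e})) := by
    rw [(h₁.indep.subset Set.diff_subset).insert_indep_iff_of_notMem (fun h => hfB₁ h.1)]
    exact ⟨h₂.subset_ground hfB₂, hfK⟩
  have hbase1 : M.IsBase (insert f (B₁ \ {e})) := h₁.exchange_isBase_of_indep hfB₁ hind1
  have hecl2 : e ∉ M.closure (B₂ \ {f}) := by
    intro hcon
    have h1 : e ∈ M.closure (insert f (C \ {f})) \ M.closure (C \ {f}) := by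
      rw [Set.insert_diff_singleton, Set.insert_eq_of_mem hfC]
      exact ⟨hC.2, hmin f hfC⟩
    have h2 := Matroid.closure_exchange h1
    have h3 : f ∈ M.closure (insert e (B₂ \ {f})) :=
      M.closure_subset_closure (Set.insert_subset_insert (Set.diff_subset_diff_left hC.1)) h2.1
    rw [Matroid.closure_insert_eq_of_mem_closure hcon] at h3
    exact h₂.indep.notMem_closure_diff_of_mem hfB₂ h3
  have hind2 : M.Indep (insert e (B₂ \ {f})) := by
    rw [(h₂.indep.subset Set.diff_subset).insert_indep_iff_of_notMem (fun h => he.2 h.1)]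
    exact ⟨heE, hecl2⟩
  exact ⟨f, ⟨hfB₂, hfB₁⟩, hbase1, h₂.exchange_isBase_of_indep he.2 hind2⟩

lemma endpoint_rep {d : ℕ} {u v x : Fin d → ℝ} (hx : x ∈ segment ℝ u v) :
    ∃ s : ℝ, 0 ≤ s ∧ x - u = s • (v - u) := by
  obtain ⟨p, q, hp, hq, hpq, hx⟩ := hx
  refine ⟨q, hq, ?_⟩
  have hp' : p = 1 - q := by linarith
  subst hp'
  rw [← hx]
  module

lemma endpoint_mem {d : ℕ} {S : Set (Fin d → ℝ)} {u v a : Fin d → ℝ} (huv : u ≠ v)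
    (hface : {x ∈ convexHull ℝ S | ∀ y ∈ convexHull ℝ S, a ⬝ᵥ y ≤ a ⬝ᵥ x} = segment ℝ u v) :
    u ∈ S := by
  have hu : u ∈ {x ∈ convexHull ℝ S | ∀ y ∈ convexHull ℝ S, a ⬝ᵥ y ≤ a ⬝ᵥ x} := by
    rw [hface]; exact left_mem_segment ℝ u v
  obtain ⟨huP, humax⟩ := hu
  apply extremePoints_convexHull_subset (𝕜 := ℝ)
  refine ⟨huP, fun x hx y hy hxy => ?_⟩
  obtain ⟨p, q, hp, hq, hpq, hcomb⟩ := hxy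
  have h3 : p * (a ⬝ᵥ x) + q * (a ⬝ᵥ y) = a ⬝ᵥ u := by
    rw [← hcomb]
    simp [dotProduct_add, dotProduct_smul, smul_eq_mul]
  have h1 : a ⬝ᵥ x ≤ a ⬝ᵥ u := humax x hx
  have h2 : a ⬝ᵥ y ≤ a ⬝ᵥ u := humax y hy
  have hsplit : p * (a ⬝ᵥ u) + q * (a ⬝ᵥ u) = a ⬝ᵥ u := by rw [← add_mul, hpq, one_mul]
  have hax : a ⬝ᵥ x = a ⬝ᵥ u := by
    by_contra hne
    have hlt : a ⬝ᵥ x < a ⬝ᵥ u := lt_of_le_of_ne h1 hne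
    have h4 := mul_lt_mul_of_pos_left hlt hp
    have h5 := mul_le_mul_of_nonneg_left h2 hq.le
    linarith
  have hay : a ⬝ᵥ y = a ⬝ᵥ u := by
    by_contra hne
    have hlt : a ⬝ᵥ y < a ⬝ᵥ u := lt_of_le_of_ne h2 hne
    have h4 := mul_lt_mul_of_pos_left hlt hq
    have h5 := mul_le_mul_of_nonneg_left h1 hp.le
    linarith
  have hxseg : x ∈ segment ℝ u v := by
    rw [← hface]; exact ⟨hx, fun z hz => (humax z hz).trans_eq hax.symm⟩
  have hyseg : y ∈ segment ℝ u v := by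
    rw [← hface]; exact ⟨hy, fun z hz => (humax z hz).trans_eq hay.symm⟩
  obtain ⟨s, hs0, hsx⟩ := endpoint_rep hxseg
  obtain ⟨r, hr0, hry⟩ := endpoint_rep hyseg
  have hd : v - u ≠ 0 := sub_ne_zero_of_ne (Ne.symm huv)
  have hzero : (p * s + q * r) • (v - u) = 0 := by
    have hps : p • (x - u) + q • (y - u) = 0 := by
      have hp1 : p = 1 - q := by linarith
      subst hp1
      rw [← hcomb]
      module
    rw [hsx, hry] at hps
    rw [← hps]
    module
  have h0 : p * s + q * r = 0 := by
    rcases smul_eq_zero.1 hzero with h | h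
    · exact h
    · exact absurd h hd
  have hs : s = 0 := by nlinarith
  have hr : r = 0 := by nlinarith
  · rw [hs, zero_smul, sub_eq_zero] at hsx; exact hsx

theorem edge_of_projected_basis_polytope {n d : ℕ} (M : Matroid (Fin n))
    (w : Fin n → (Fin d → ℝ)) (u v : Fin d → ℝ) (huv : u ≠ v)
    (P : Set (Fin d → ℝ)) (hP : P = convexHull ℝ {x | ∃ B, M.IsBase B ∧ x = wsum w B})
    (hface : ∃ a : Fin d → ℝ,
      {x ∈ P | ∀ y ∈ P, a ⬝ᵥ y ≤ a ⬝ᵥ x} = segment ℝ u v) :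
    ∃ (i j : Fin n) (t : ℝ), u - v = t • (w i - w j) := by
  obtain ⟨a, hface⟩ := hface
  subst hP
  set S := {x | ∃ B, M.IsBase B ∧ x = wsum w B} with hS
  have hu : u ∈ S := endpoint_mem huv hface
  have hv : v ∈ S := by
    apply endpoint_mem (Ne.symm huv) (a := a)
    rw [hface, segment_symm]
  obtain ⟨Bu, hBu, hwu⟩ := hu
  obtain ⟨Bv, hBv, hwv⟩ := hv
  have humem : u ∈ {x ∈ convexHull ℝ S | ∀ y ∈ convexHull ℝ S, a ⬝ᵥ y ≤ a ⬝ᵥ x} := by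
    rw [hface]; exact left_mem_segment ℝ u v
  have hvmem : v ∈ {x ∈ convexHull ℝ S | ∀ y ∈ convexHull ℝ S, a ⬝ᵥ y ≤ a ⬝ᵥ x} := by
    rw [hface]; exact right_mem_segment ℝ u v
  have hbase_le : ∀ B, M.IsBase B → a ⬝ᵥ wsum w B ≤ a ⬝ᵥ u :=
    fun B hB => humem.2 _ (subset_convexHull ℝ S ⟨B, hB, rfl⟩)
  have hseg_of_max : ∀ B, M.IsBase B → a ⬝ᵥ u ≤ a ⬝ᵥ wsum w B → wsum w B ∈ segment ℝ u v := by
    intro B hB hge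
    rw [← hface]
    exact ⟨subset_convexHull ℝ S ⟨B, hB, rfl⟩, fun z hz => (humem.2 z hz).trans hge⟩
  have havu : a ⬝ᵥ v = a ⬝ᵥ u := le_antisymm (humem.2 v hvmem.1) (hvmem.2 u humem.1)
  have main : ∀ k (B₁ B₂ : Set (Fin n)), M.IsBase B₁ → M.IsBase B₂ →
      wsum w B₁ = u → wsum w B₂ = v → (B₁ \ B₂).ncard = k →
      ∃ (i j : Fin n) (t : ℝ), u - v = t • (w i - w j) := by
    intro k
    induction k using Nat.strong_induction_on with
    | _ k ih =>
      intro B₁ B₂ hB₁ hB₂ hw1 hw2 hk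
      have hne : B₁ ≠ B₂ := fun h => huv (by rw [← hw1, ← hw2, h])
      have hnonempty : (B₁ \ B₂).Nonempty := by
        rw [Set.nonempty_iff_ne_empty]
        intro h
        exact hne (hB₁.eq_of_subset_isBase hB₂ (Set.diff_eq_empty.1 h))
      obtain ⟨e, he⟩ := hnonempty
      obtain ⟨f, hf, hbase1, hbase2⟩ := base_symm_exchange (Set.toFinite B₂) hB₁ hB₂ he
      have hw1' : wsum w (insert f (B₁ \ {e})) = u + (w f - w e) := by
        rw [wsum_exchange w (Set.toFinite B₁) he.1 hf.2, hw1]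
      have hw2' : wsum w (insert e (B₂ \ {f})) = v + (w e - w f) := by
        rw [wsum_exchange w (Set.toFinite B₂) hf.1 he.2, hw2]
      have hval1 : a ⬝ᵥ wsum w (insert f (B₁ \ {e})) ≤ a ⬝ᵥ u := hbase_le _ hbase1
      have hval2 : a ⬝ᵥ wsum w (insert e (B₂ \ {f})) ≤ a ⬝ᵥ u := hbase_le _ hbase2
      have hsum : a ⬝ᵥ wsum w (insert f (B₁ \ {e})) + a ⬝ᵥ wsum w (insert e (B₂ \ {f}))
          = a ⬝ᵥ u + a ⬝ᵥ u := by
        rw [hw1', hw2']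
        simp only [dotProduct_add, dotProduct_sub, havu]
        ring
      have heq1 : a ⬝ᵥ u ≤ a ⬝ᵥ wsum w (insert f (B₁ \ {e})) := by linarith
      have hseg := hseg_of_max _ hbase1 heq1
      rw [hw1'] at hseg
      obtain ⟨s, hs0, hsrep⟩ := endpoint_rep hseg
      have hrep : w f - w e = s • (v - u) := by
        rw [← hsrep]; abel
      by_cases hs : s = 0
      · have hwfe : w f = w e := by
          rw [hs, zero_smul] at hrep; exact sub_eq_zero.1 hrep
        have hwu' : wsum w (insert f (B₁ \ {e})) = u := by
          rw [hw1', hwfe]; abel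
        have hset : (insert f (B₁ \ {e})) \ B₂ = (B₁ \ B₂) \ {e} := by
          ext x
          simp only [Set.mem_diff, Set.mem_insert_iff, Set.mem_singleton_iff]
          constructor
          · rintro ⟨rfl | ⟨hxB, hxe⟩, hxB₂⟩
            · exact absurd hf.1 hxB₂
            · exact ⟨⟨hxB, hxB₂⟩, hxe⟩
          · rintro ⟨⟨hxB, hxB₂⟩, hxe⟩
            exact ⟨Or.inr ⟨hxB, hxe⟩, hxB₂⟩
        have hcard : ((insert f (B₁ \ {e})) \ B₂).ncard < k := by
          rw [hset, ← hk]
          exact Set.ncard_diff_singleton_lt_of_mem he (Set.toFinite _)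
        exact ih _ hcard _ _ hbase1 hB₂ hwu' hw2 rfl
      · refine ⟨e, f, s⁻¹, ?_⟩
        have hrep' : s • (u - v) = w e - w f := by
          have : w e - w f = s • (u - v) := by
            rw [show u - v = -(v - u) by ring, smul_neg, ← hrep]; ring
          exact this.symm
        rw [← hrep', smul_smul, inv_mul_cancel₀ hs, one_smul]
  exact main _ Bu Bv hBu hBv hwu.symm hwv.symm rfl
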